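/- The proof system UM is sound: every formula φ ∈ L derivable in UM is valid, i.e., (M,s) ⊨ φ for every epistemic state (M,s). -/

import Mathlib

/-- Formulas of the language `L` of epistemic logic with updates (events of
epistemic and/or ontic change).  The constructor `upd` inlines an update
`(U,e)`: an event type `E`, accessibility relations on events, preconditions,
postconditions, and the actual event `e`.  `⊤` and `⊥` are included as the
usual primitives. -/
inductive Form (A P : Type) : Type 1 where
  | atom : P → Form A P
  | top : Form A P
  | bot : Form A P
  | neg : Form A P → Form A P
  | and : Form A P → Form A P → Form A P
  | box : A → Form A P → Form A P
  | cbox : Set A → Form A P → Form A P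
  | upd : (E : Type) → (A → E → E → Prop) → (E → Form A P) → (E → P → Form A P) →
      E → Form A P → Form A P

/-- An update model `U = (E, rel, pre, post)`. -/
structure Upd (A P : Type) : Type 1 where
  E : Type
  rel : A → E → E → Prop
  pre : E → Form A P
  post : E → P → Form A P

/-- An epistemic model `M = (S, R, V)`. -/
structure Model (A P : Type) : Type 1 where
  S : Type
  R : A → S → S → Prop
  V : P → S → Prop

/-- The formula `[U,e]φ`. -/
def Form.updF {A P : Type} (U : Upd A P) (e : U.E) (φ : Form A P) : Form A P :=
  Form.upd U.E U.rel U.pre U.post e φ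

/-- The product construction, parameterised by the satisfaction relations of the
preconditions and postconditions of the events. -/
def prodM {A P : Type} (M : Model A P) (E : Type) (rel : A → E → E → Prop)
    (preS : E → M.S → Prop) (postS : E → M.S → P → Prop) : Model A P where
  S := { x : M.S × E // preS x.2 x.1 }
  R a x y := M.R a x.1.1 y.1.1 ∧ rel a x.1.2 y.1.2
  V p x := postS x.1.2 x.1.1 p

/-- Satisfaction: `sat φ M s` is `(M,s) ⊨ φ`. -/
def sat {A P : Type} : Form A P → (M : Model A P) → M.S → Prop
  | .atom p, M, s => M.V p s
  | .top, _, _ => True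
  | .bot, _, _ => False
  | .neg φ, M, s => ¬ sat φ M s
  | .and φ ψ, M, s => sat φ M s ∧ sat ψ M s
  | .box a φ, M, s => ∀ t, M.R a s t → sat φ M t
  | .cbox B φ, M, s =>
      ∀ t, Relation.ReflTransGen (fun x y => ∃ a ∈ B, M.R a x y) s t → sat φ M t
  | .upd E rel pre post e φ, M, s =>
      ∀ h : sat (pre e) M s,
        sat φ (prodM M E rel (fun f t => sat (pre f) M t) (fun f t p => sat (post f p) M t))
          ⟨(s, e), h⟩

/-- The product update `M ⊗ U`; its domain is `{(t,f) | (M,t) ⊨ pre(f)}`. -/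
def Model.prodUpd {A P : Type} (M : Model A P) (U : Upd A P) : Model A P :=
  prodM M U.E U.rel (fun f t => sat (U.pre f) M t) (fun f t p => sat (U.post f p) M t)

/-- Well-formedness of a formula: all event sets of update models occurring in it are
finite and nonempty, and all postconditions differ from the identity `p ↦ p` on only
finitely many atoms (this finite set being the domain `dom(post(e))`). -/
def Form.WF {A P : Type} : Form A P → Prop
  | .atom _ => True
  | .top => True
  | .bot => True
  | .neg φ => φ.WF
  | .and φ ψ => φ.WF ∧ ψ.WF
  | .box _ φ => φ.WF
  | .cbox _ φ => φ.WF
  | .upd E _ pre post _ φ =>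
      Nonempty E ∧ Finite E ∧ (∀ f, (pre f).WF) ∧ (∀ f p, (post f p).WF) ∧
      (∀ f, {p | post f p ≠ Form.atom p}.Finite) ∧ φ.WF

/-- Well-formedness of an update model: the event set is finite and nonempty, the
preconditions and postconditions are well-formed formulas, and each postcondition
differs from the identity on only finitely many atoms, the set
`{p | post e p ≠ atom p}` being the domain `dom(post(e))`. -/
def Upd.WF {A P : Type} (U : Upd A P) : Prop :=
  Nonempty U.E ∧ Finite U.E ∧ (∀ f, (U.pre f).WF) ∧ (∀ f p, (U.post f p).WF) ∧
  (∀ f, {p | U.post f p ≠ Form.atom p}.Finite)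

/-- Disjunction, as the usual abbreviation. -/
def Form.or {A P : Type} (φ ψ : Form A P) : Form A P := (φ.neg.and ψ.neg).neg

/-- Implication, as the usual abbreviation. -/
def Form.imp {A P : Type} (φ ψ : Form A P) : Form A P := (φ.and ψ.neg).neg

/-- Bi-implication, as the usual abbreviation. -/
def Form.biImp {A P : Type} (φ ψ : Form A P) : Form A P := (φ.imp ψ).and (ψ.imp φ)

/-- Finite conjunction of a list of formulas. -/
def bigAnd {A P : Type} (l : List (Form A P)) : Form A P := l.foldr Form.and Form.top

/-- Finite disjunction of a list of formulas. -/
def bigOr {A P : Type} (l : List (Form A P)) : Form A P := l.foldr Form.or Form.bot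

open Classical in
/-- Composition `(U,e) ; (U',e')` of update models: the underlying update model has
events `E × E'`, `pre''(f,f') = pre(f) ∧ [U,f]pre'(f')`, and for `p ∈ dom(post''(f,f'))
= dom(post(f)) ∪ dom(post'(f'))`: `post''(f,f')(p) = post(f)(p)` if `p ∉ dom(post'(f'))`
and `[U,f]post'(f')(p)` otherwise; the point is the pair `(e,e')`. -/
noncomputable def Upd.comp {A P : Type} (U U' : Upd A P) : Upd A P where
  E := U.E × U'.E
  rel a x y := U.rel a x.1 y.1 ∧ U'.rel a x.2 y.2
  pre x := (U.pre x.1).and (Form.updF U x.1 (U'.pre x.2))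
  post x p :=
    if U'.post x.2 p = Form.atom p then U.post x.1 p
    else Form.updF U x.1 (U'.post x.2 p)

/-- Propositional formulas in `n` variables (templates for instantiations of
propositional tautologies). -/
inductive PropForm : ℕ → Type where
  | var {n : ℕ} : Fin n → PropForm n
  | top {n : ℕ} : PropForm n
  | bot {n : ℕ} : PropForm n
  | neg {n : ℕ} : PropForm n → PropForm n
  | and {n : ℕ} : PropForm n → PropForm n → PropForm n

/-- Boolean evaluation of a propositional template. -/
def PropForm.eval {n : ℕ} (v : Fin n → Bool) : PropForm n → Bool
  | .var i => v i
  | .top => true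
  | .bot => false
  | .neg t => !(t.eval v)
  | .and t u => t.eval v && u.eval v

/-- Substitution of formulas for the variables of a propositional template. -/
def PropForm.subst {A P : Type} {n : ℕ} (σ : Fin n → Form A P) : PropForm n → Form A P
  | .var i => σ i
  | .top => Form.top
  | .bot => Form.bot
  | .neg t => Form.neg (t.subst σ)
  | .and t u => Form.and (t.subst σ) (u.subst σ)

/-- A propositional template is a tautology: true under every Boolean valuation. -/
def PropForm.Taut {n : ℕ} (t : PropForm n) : Prop := ∀ v : Fin n → Bool, t.eval v = true

/-- The proof system UM. -/
inductive Deriv {A P : Type} : Form A P → Prop where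
  /-- all instantiations of propositional tautologies -/
  | taut {n : ℕ} (t : PropForm n) (σ : Fin n → Form A P) (ht : t.Taut)
      (hσ : ∀ i, (σ i).WF) : Deriv (t.subst σ)
  /-- distribution for `[a]` -/
  | distBox (a : A) (φ ψ : Form A P) (hφ : φ.WF) (hψ : ψ.WF) :
      Deriv (Form.imp (Form.box a (Form.imp φ ψ)) (Form.imp (Form.box a φ) (Form.box a ψ)))
  /-- distribution for `[B*]` -/
  | distCbox (B : Set A) (φ ψ : Form A P) (hφ : φ.WF) (hψ : ψ.WF) :
      Deriv (Form.imp (Form.cbox B (Form.imp φ ψ)) (Form.imp (Form.cbox B φ) (Form.cbox B ψ)))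
  /-- distribution for `[U,e]` -/
  | distUpd (U : Upd A P) (e : U.E) (hU : U.WF) (φ ψ : Form A P) (hφ : φ.WF) (hψ : ψ.WF) :
      Deriv (Form.imp (Form.updF U e (Form.imp φ ψ))
        (Form.imp (Form.updF U e φ) (Form.updF U e ψ)))
  /-- modus ponens -/
  | mp {φ ψ : Form A P} : Deriv (Form.imp φ ψ) → Deriv φ → Deriv ψ
  /-- necessitation for `[a]` -/
  | necBox (a : A) {φ : Form A P} : Deriv φ → Deriv (Form.box a φ)
  /-- necessitation for `[B*]` -/
  | necCbox (B : Set A) {φ : Form A P} : Deriv φ → Deriv (Form.cbox B φ)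
  /-- necessitation for `[U,e]` -/
  | necUpd (U : Upd A P) (e : U.E) (hU : U.WF) {φ : Form A P} :
      Deriv φ → Deriv (Form.updF U e φ)
  /-- update and atoms -/
  | updAtom (U : Upd A P) (e : U.E) (hU : U.WF) (p : P) :
      Deriv (Form.biImp (Form.updF U e (Form.atom p)) (Form.imp (U.pre e) (U.post e p)))
  /-- update and negation -/
  | updNeg (U : Upd A P) (e : U.E) (hU : U.WF) (φ : Form A P) (hφ : φ.WF) :
      Deriv (Form.biImp (Form.updF U e (Form.neg φ))
        (Form.imp (U.pre e) (Form.neg (Form.updF U e φ))))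
  /-- update and conjunction -/
  | updAnd (U : Upd A P) (e : U.E) (hU : U.WF) (φ ψ : Form A P) (hφ : φ.WF) (hψ : ψ.WF) :
      Deriv (Form.biImp (Form.updF U e (Form.and φ ψ))
        (Form.and (Form.updF U e φ) (Form.updF U e ψ)))
  /-- update and knowledge (`lf` enumerates `{f | (e,f) ∈ R(a)}`) -/
  | updBox (U : Upd A P) (e : U.E) (hU : U.WF) (a : A) (φ : Form A P) (hφ : φ.WF)
      (lf : List U.E) (hlf : ∀ f, f ∈ lf ↔ U.rel a e f) :
      Deriv (Form.biImp (Form.updF U e (Form.box a φ))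
        (Form.imp (U.pre e) (bigAnd (lf.map fun f => Form.box a (Form.updF U f φ)))))
  /-- update composition -/
  | updComp (U : Upd A P) (e : U.E) (U' : Upd A P) (e' : U'.E) (hU : U.WF) (hU' : U'.WF)
      (φ : Form A P) (hφ : φ.WF) :
      Deriv (Form.biImp (Form.updF U e (Form.updF U' e' φ))
        (Form.updF (U.comp U') (e, e') φ))
  /-- mix (`lB` enumerates `B`; `[B]ψ` is the conjunction `⋀_{a ∈ B} [a]ψ`) -/
  | mix (B : Set A) (lB : List A) (hlB : ∀ a, a ∈ lB ↔ a ∈ B) (φ : Form A P) (hφ : φ.WF) :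
      Deriv (Form.imp (Form.cbox B φ)
        (Form.and φ (bigAnd (lB.map fun a => Form.box a (Form.cbox B φ)))))
  /-- induction axiom -/
  | induc (B : Set A) (lB : List A) (hlB : ∀ a, a ∈ lB ↔ a ∈ B) (φ : Form A P) (hφ : φ.WF) :
      Deriv (Form.imp (Form.cbox B (Form.imp φ (bigAnd (lB.map fun a => Form.box a φ))))
        (Form.imp φ (Form.cbox B φ)))
  /-- updates and common knowledge -/
  | updCK (U : Upd A P) (e : U.E) (hU : U.WF) (B : Set A) (φ : Form A P) (hφ : φ.WF)
      (χ : U.E → Form A P) (hχ : ∀ f, (χ f).WF)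
      (h1 : ∀ f, Relation.ReflTransGen (fun x y => ∃ a ∈ B, U.rel a x y) e f →
        Deriv (Form.imp (χ f) (Form.updF U f φ)))
      (h2 : ∀ f, Relation.ReflTransGen (fun x y => ∃ a ∈ B, U.rel a x y) e f →
        ∀ a ∈ B, ∀ g, U.rel a f g →
          Deriv (Form.imp (Form.and (χ f) (U.pre f)) (Form.box a (χ g)))) :
      Deriv (Form.imp (χ e) (Form.updF U e (Form.cbox B φ)))



section Soundness

open Classical

lemma sat_imp {A P : Type} (φ ψ : Form A P) (M : Model A P) (s : M.S) :
    sat (Form.imp φ ψ) M s ↔ (sat φ M s → sat ψ M s) := by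
  simp only [Form.imp, sat]; tauto

lemma sat_biImp {A P : Type} (φ ψ : Form A P) (M : Model A P) (s : M.S) :
    sat (Form.biImp φ ψ) M s ↔ (sat φ M s ↔ sat ψ M s) := by
  simp only [Form.biImp, sat, sat_imp]; tauto

lemma sat_bigAnd {A P : Type} (l : List (Form A P)) (M : Model A P) (s : M.S) :
    sat (bigAnd l) M s ↔ ∀ ψ ∈ l, sat ψ M s := by
  induction l with
  | nil => simp [bigAnd, sat]
  | cons h t ih =>
    simp only [bigAnd, List.foldr] at ih ⊢
    simp only [sat, ih, List.mem_cons]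
    constructor
    · rintro ⟨h1, h2⟩ ψ (rfl | hm)
      · exact h1
      · exact h2 ψ hm
    · intro h; exact ⟨h _ (Or.inl rfl), fun ψ hm => h ψ (Or.inr hm)⟩

open Classical in
lemma eval_subst {A P : Type} {n : ℕ} (σ : Fin n → Form A P) (M : Model A P) (s : M.S)
    (t : PropForm n) :
    sat (t.subst σ) M s ↔ t.eval (fun i => decide (sat (σ i) M s)) = true := by
  induction t with
  | var i => simp [PropForm.subst, PropForm.eval]
  | top => simp [PropForm.subst, PropForm.eval, sat]
  | bot => simp [PropForm.subst, PropForm.eval, sat]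
  | neg t ih => simp [PropForm.subst, PropForm.eval, sat, ih]
  | and t u ih1 ih2 => simp [PropForm.subst, PropForm.eval, sat, ih1, ih2]

/-- Satisfaction is invariant under isomorphism of models. -/
lemma sat_equiv {A P : Type} (φ : Form A P) :
    ∀ (M N : Model A P) (g : M.S ≃ N.S),
    (∀ a s t, M.R a s t ↔ N.R a (g s) (g t)) →
    (∀ p s, M.V p s ↔ N.V p (g s)) →
    ∀ s, sat φ M s ↔ sat φ N (g s) := by
  induction φ with
  | atom p => intro M N g hR hV s; exact hV p s
  | top => intro M N g hR hV s; simp [sat]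
  | bot => intro M N g hR hV s; simp [sat]
  | neg φ ih => intro M N g hR hV s; simp only [sat]; rw [ih M N g hR hV s]
  | and φ ψ ih1 ih2 =>
    intro M N g hR hV s; simp only [sat]
    rw [ih1 M N g hR hV, ih2 M N g hR hV]
  | box a φ ih =>
    intro M N g hR hV s
    simp only [sat]
    constructor
    · intro h t ht
      have := h (g.symm t) ((hR a s (g.symm t)).mpr (by simpa using ht))
      have h2 := (ih M N g hR hV (g.symm t)).mp this
      simpa using h2
    · intro h t ht
      exact (ih M N g hR hV t).mpr (h (g t) ((hR a s t).mp ht))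
  | cbox B φ ih =>
    intro M N g hR hV s
    simp only [sat]
    constructor
    · intro h t ht
      have hpath : Relation.ReflTransGen (fun x y => ∃ a ∈ B, M.R a x y) s (g.symm t) := by
        have := Relation.ReflTransGen.lift (r := fun x y => ∃ a ∈ B, N.R a x y)
          (p := fun x y => ∃ a ∈ B, M.R a x y) g.symm
          (fun x y hxy => by
            obtain ⟨a, ha, hr⟩ := hxy
            exact ⟨a, ha, (hR a (g.symm x) (g.symm y)).mpr (by simpa using hr)⟩) _ _ ht
        simpa [Function.onFun] using this
      have h2 := (ih M N g hR hV (g.symm t)).mp (h (g.symm t) hpath)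
      simpa using h2
    · intro h t ht
      apply (ih M N g hR hV t).mpr
      apply h
      exact Relation.ReflTransGen.lift (r := fun x y => ∃ a ∈ B, M.R a x y) g
        (fun x y hxy => by
          obtain ⟨a, ha, hr⟩ := hxy
          exact ⟨a, ha, (hR a x y).mp hr⟩) _ _ ht
  | upd E rel pre post e φ ihpre ihpost ihφ =>
    intro M N g hR hV s
    have hpre : ∀ (f : E) (t : M.S), sat (pre f) M t ↔ sat (pre f) N (g t) :=
      fun f t => ihpre f M N g hR hV t
    let MU := prodM M E rel (fun f t => sat (pre f) M t) (fun f t p => sat (post f p) M t)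
    let NU := prodM N E rel (fun f t => sat (pre f) N t) (fun f t p => sat (post f p) N t)
    let g' : MU.S ≃ NU.S :=
      { toFun := fun x => ⟨(g x.1.1, x.1.2), (hpre x.1.2 x.1.1).mp x.2⟩
        invFun := fun x => ⟨(g.symm x.1.1, x.1.2), (hpre x.1.2 (g.symm x.1.1)).mpr
          (by simpa using x.2)⟩
        left_inv := fun x => by apply Subtype.ext; simp
        right_inv := fun x => by apply Subtype.ext; simp }
    have hR' : ∀ a x y, MU.R a x y ↔ NU.R a (g' x) (g' y) := by
      intro a x y
      simp only [MU, NU, g', prodM, Equiv.coe_fn_mk]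
      rw [hR a x.1.1 y.1.1]
      exact Iff.rfl
    have hV' : ∀ p x, MU.V p x ↔ NU.V p (g' x) := by
      intro p x
      exact ihpost x.1.2 p M N g hR hV x.1.1
    simp only [sat]
    constructor
    · intro h hp
      have h1 := h ((hpre e s).mpr hp)
      exact (ihφ MU NU g' hR' hV' ⟨(s, e), (hpre e s).mpr hp⟩).mp h1
    · intro h hp
      exact (ihφ MU NU g' hR' hV' ⟨(s, e), hp⟩).mpr (h ((hpre e s).mp hp))

lemma deriv_sound {A P : Type} {φ : Form A P} (hderiv : Deriv φ) :
    ∀ (M : Model A P) (s : M.S), sat φ M s := by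
  induction hderiv with
  | taut t σ ht hσ =>
    intro M s
    rw [eval_subst]
    exact ht _
  | distBox a φ ψ hφ hψ =>
    intro M s
    rw [sat_imp, sat_imp]
    intro h1 h2
    simp only [sat] at h1 h2 ⊢
    intro t ht
    exact (sat_imp φ ψ M t).mp (h1 t ht) (h2 t ht)
  | distCbox B φ ψ hφ hψ =>
    intro M s
    rw [sat_imp, sat_imp]
    intro h1 h2
    simp only [sat] at h1 h2 ⊢
    intro t ht
    exact (sat_imp φ ψ M t).mp (h1 t ht) (h2 t ht)
  | distUpd U e hU φ ψ hφ hψ =>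
    intro M s
    rw [sat_imp, sat_imp]
    simp only [Form.updF, sat]
    intro h1 h2 hp
    exact (sat_imp φ ψ _ _).mp (h1 hp) (h2 hp)
  | mp h1 h2 ih1 ih2 =>
    intro M s
    exact (sat_imp _ _ M s).mp (ih1 M s) (ih2 M s)
  | necBox a h ih =>
    intro M s
    simp only [sat]
    intro t _
    exact ih M t
  | necCbox B h ih =>
    intro M s
    simp only [sat]
    intro t _
    exact ih M t
  | necUpd U e hU h ih =>
    intro M s
    simp only [Form.updF, sat]
    intro _
    exact ih _ _
  | updAtom U e hU p =>
    intro M s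
    rw [sat_biImp, sat_imp]
    simp only [Form.updF, sat, prodM]
  | updNeg U e hU φ hφ =>
    intro M s
    rw [sat_biImp, sat_imp]
    simp only [Form.updF, sat]
    constructor
    · intro h hp hall
      exact h hp (hall hp)
    · intro h hp hsat
      exact h hp (fun _ => hsat)
  | updAnd U e hU φ ψ hφ hψ =>
    intro M s
    rw [sat_biImp]
    simp only [Form.updF, sat]
    constructor
    · intro h
      exact ⟨fun hp => (h hp).1, fun hp => (h hp).2⟩
    · intro h hp
      exact ⟨h.1 hp, h.2 hp⟩
  | updBox U e hU a φ hφ lf hlf =>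
    intro M s
    rw [sat_biImp, sat_imp, sat_bigAnd]
    simp only [Form.updF, sat]
    constructor
    · intro h hp ψ hψ
      simp only [List.mem_map] at hψ
      obtain ⟨f, hf, rfl⟩ := hψ
      simp only [sat]
      intro u hu
      intro hfu
      exact h hp ⟨(u, f), hfu⟩ ⟨hu, (hlf f).mp hf⟩
    · intro h hp t ht
      obtain ⟨⟨u, f⟩, hf⟩ := t
      obtain ⟨hu, hef⟩ := ht
      have h2 := h hp (Form.box a (Form.updF U f φ))
        (List.mem_map.mpr ⟨f, (hlf f).mpr hef, rfl⟩)
      simp only [Form.updF, sat] at h2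
      exact h2 u hu hf
  | updComp U e U' e' hU hU' φ hφ =>
    intro M s
    rw [sat_biImp]
    let MU := prodM M U.E U.rel (fun f t => sat (U.pre f) M t)
      (fun f t p => sat (U.post f p) M t)
    let MUU' := prodM MU U'.E U'.rel (fun f t => sat (U'.pre f) MU t)
      (fun f t p => sat (U'.post f p) MU t)
    let MU'' := prodM M (U.comp U').E (U.comp U').rel
      (fun f t => sat ((U.comp U').pre f) M t)
      (fun f t p => sat ((U.comp U').post f p) M t)
    let G : MUU'.S ≃ MU''.S :=
      { toFun := fun x => ⟨(x.1.1.1.1, (x.1.1.1.2, x.1.2)),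
          ⟨x.1.1.2, fun _ => x.2⟩⟩
        invFun := fun y => ⟨(⟨(y.1.1, y.1.2.1), y.2.1⟩, y.1.2.2), y.2.2 y.2.1⟩
        left_inv := fun x => rfl
        right_inv := fun y => rfl }
    have hR : ∀ a x y, MUU'.R a x y ↔ MU''.R a (G x) (G y) := by
      intro a x y
      simp only [MUU', MU'', MU, G, prodM, Upd.comp, Equiv.coe_fn_mk]
      tauto
    have hV : ∀ p x, MUU'.V p x ↔ MU''.V p (G x) := by
      intro p x
      obtain ⟨⟨⟨⟨t, f⟩, hf⟩, f'⟩, hf'⟩ := x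
      show sat (U'.post f' p) MU ⟨(t, f), hf⟩ ↔ sat ((U.comp U').post (f, f') p) M t
      by_cases hc : U'.post f' p = Form.atom p
      · have : (U.comp U').post (f, f') p = U.post f p := by
          simp only [Upd.comp, if_pos hc]
        rw [this, hc]
        exact Iff.rfl
      · have : (U.comp U').post (f, f') p = Form.updF U f (U'.post f' p) := by
          simp only [Upd.comp, if_neg hc]
        rw [this]
        simp only [Form.updF, sat]
        constructor
        · intro h _; exact h
        · intro h; exact h hf
    constructor
    · intro h
      simp only [Form.updF, sat] at h ⊢
      intro hp
      have h1 : sat (U.pre e) M s := hp.1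
      have h2 : sat (U'.pre e') MU ⟨(s, e), h1⟩ := hp.2 h1
      exact (sat_equiv φ MUU' MU'' G hR hV ⟨(⟨(s, e), h1⟩, e'), h2⟩).mp (h h1 h2)
    · intro h
      simp only [Form.updF, sat] at h ⊢
      intro h1 h2
      exact (sat_equiv φ MUU' MU'' G hR hV ⟨(⟨(s, e), h1⟩, e'), h2⟩).mpr
        (h ⟨h1, fun _ => h2⟩)
  | mix B lB hlB φ hφ =>
    intro M s
    rw [sat_imp]
    intro h
    simp only [sat] at h ⊢
    refine ⟨h s Relation.ReflTransGen.refl, ?_⟩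
    rw [sat_bigAnd]
    intro ψ hψ
    simp only [List.mem_map] at hψ
    obtain ⟨a, ha, rfl⟩ := hψ
    simp only [sat]
    intro t hat u hu
    exact h u (Relation.ReflTransGen.head ⟨a, (hlB a).mp ha, hat⟩ hu)
  | induc B lB hlB φ hφ =>
    intro M s
    rw [sat_imp, sat_imp]
    intro h hφs
    simp only [sat] at h ⊢
    intro t ht
    induction ht with
    | refl => exact hφs
    | tail hpath hstep ih =>
      obtain ⟨a, ha, hr⟩ := hstep
      have h2 := (sat_imp _ _ M _).mp (h _ hpath) ih
      rw [sat_bigAnd] at h2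
      have h3 := h2 (Form.box a φ) (List.mem_map.mpr ⟨a, (hlB a).mpr ha, rfl⟩)
      simp only [sat] at h3
      exact h3 _ hr
  | updCK U e hU B φ hφ χ hχ h1 h2 ih1 ih2 =>
    intro M s
    rw [sat_imp]
    intro hχe
    simp only [Form.updF, sat]
    intro hpre t ht
    let MU := prodM M U.E U.rel (fun f u => sat (U.pre f) M u)
      (fun f u p => sat (U.post f p) M u)
    have key : ∀ t : MU.S,
        Relation.ReflTransGen (fun x y => ∃ a ∈ B, MU.R a x y) ⟨(s, e), hpre⟩ t →
        sat (χ t.1.2) M t.1.1 ∧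
        Relation.ReflTransGen (fun x y => ∃ a ∈ B, U.rel a x y) e t.1.2 := by
      intro t ht
      induction ht with
      | refl => exact ⟨hχe, Relation.ReflTransGen.refl⟩
      | @tail b c hpath hstep ih =>
        obtain ⟨a, ha, hMR, hUr⟩ := hstep
        have hbox := (sat_imp _ _ M b.1.1).mp (ih2 b.1.2 ih.2 a ha c.1.2 hUr M b.1.1)
          (by simp only [sat]; exact ⟨ih.1, b.2⟩)
        simp only [sat] at hbox
        exact ⟨hbox c.1.1 hMR, Relation.ReflTransGen.tail ih.2 ⟨a, ha, hUr⟩⟩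
    have hk := key t ht
    have := (sat_imp _ _ M t.1.1).mp (ih1 t.1.2 hk.2 M t.1.1) hk.1
    simp only [Form.updF, sat] at this
    exact this t.2

lemma um_soundness_aux : True := trivial

end Soundness

/-- the proof system UM is sound: every formula `φ ∈ L` derivable in
UM is valid, i.e. `(M,s) ⊨ φ` for every epistemic state `(M,s)`. -/
theorem um_soundness {A P : Type} [Finite A] [Countable P]
    (φ : Form A P) (hφ : φ.WF) (hderiv : Deriv φ) :
    ∀ M : Model A P, Nonempty M.S → ∀ s : M.S, sat φ M s :=
  fun M _ s => deriv_sound hderiv M s
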